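/- Let ω̃ : (0,1] → [0,∞) be nondecreasing with ∫_0^1 ω̃(ρ)/ρ dρ < ∞ and ω̃(1) ≤ 1, let 0 < θ ≤ 1 and 0 < η < 1, and define ω_u(r) = r^θ + ∫_0^{r/η²} ω̃(ρ)/ρ dρ + r^θ·∫_r^1 ω̃(ρ)/ρ^{1+θ} dρ for 0 < r < η². Then ω_u is nondecreasing on (0, η²) and ω_u(r) → 0 as r → 0⁺; that is, ω_u extends to a modulus of continuity. -/

import Mathlib

open MeasureTheory Filter

/-- The function `ω_u(r) = r^θ + ∫_0^{r/η²} ω̃(ρ)/ρ dρ + r^θ ∫_r^1 ω̃(ρ)/ρ^{1+θ} dρ` arising in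
pointwise `C²` regularity under Dini conditions is nondecreasing on `(0, η²)` and tends to `0`
as `r → 0⁺`; i.e. it extends to a modulus of continuity. -/
theorem modulus_of_continuity_C2 (η θ : ℝ)
    (hη : 0 < η) (hη1 : η < 1) (hθ : 0 < θ) (hθ1 : θ ≤ 1)
    (ω : ℝ → ℝ)
    (hωnn : ∀ r : ℝ, 0 < r → r ≤ 1 → 0 ≤ ω r)
    (hωmono : ∀ r s : ℝ, 0 < r → r ≤ s → s ≤ 1 → ω r ≤ ω s)
    (hω1 : ω 1 ≤ 1)
    (hωdini : IntegrableOn (fun ρ : ℝ => ω ρ / ρ) (Set.Ioc 0 1)) :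
    MonotoneOn
      (fun r : ℝ => r ^ θ + (∫ ρ in (0 : ℝ)..(r / η ^ 2), ω ρ / ρ)
        + r ^ θ * ∫ ρ in r..(1 : ℝ), ω ρ / ρ ^ (1 + θ))
      (Set.Ioo 0 (η ^ 2)) ∧
    Tendsto
      (fun r : ℝ => r ^ θ + (∫ ρ in (0 : ℝ)..(r / η ^ 2), ω ρ / ρ)
        + r ^ θ * ∫ ρ in r..(1 : ℝ), ω ρ / ρ ^ (1 + θ))
      (nhdsWithin 0 (Set.Ioi 0)) (nhds 0) := by
  have hη2 : (0:ℝ) < η ^ 2 := by positivity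
  have hη21 : η ^ 2 < 1 := by nlinarith
  -- integrability of `ω ρ / ρ` on subintervals of `[0,1]`
  have hf_int : ∀ a b : ℝ, 0 ≤ a → a ≤ 1 → 0 ≤ b → b ≤ 1 →
      IntervalIntegrable (fun ρ : ℝ => ω ρ / ρ) volume a b := by
    intro a b ha ha1 hb hb1
    rw [intervalIntegrable_iff]
    refine hωdini.mono_set ?_
    rw [Set.uIoc]
    exact Set.Ioc_subset_Ioc (le_min ha hb) (max_le ha1 hb1)
  -- integrability of `ω ρ / ρ ^ (1+θ)` on subintervals of `(0,1]`
  have hg_int : ∀ a b : ℝ, 0 < a → a ≤ 1 → 0 < b → b ≤ 1 →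
      IntervalIntegrable (fun ρ : ℝ => ω ρ / ρ ^ (1 + θ)) volume a b := by
    intro a b ha ha1 hb hb1
    have hmono : MonotoneOn ω (Set.uIcc a b) := by
      intro x hx y hy hxy
      have hx0 : 0 < x := lt_of_lt_of_le (lt_min ha hb) hx.1
      have hy1 : y ≤ 1 := le_trans hy.2 (max_le ha1 hb1)
      exact hωmono x y hx0 hxy hy1
    have h1 : IntervalIntegrable ω volume a b := hmono.intervalIntegrable
    have h2 : ContinuousOn (fun x : ℝ => (x ^ (1 + θ))⁻¹) (Set.uIcc a b) := by
      apply ContinuousOn.inv₀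
      · intro x hx
        have hx0 : 0 < x := lt_of_lt_of_le (lt_min ha hb) hx.1
        exact (Real.continuousAt_rpow_const x (1 + θ) (Or.inl hx0.ne')).continuousWithinAt
      · intro x hx
        have hx0 : 0 < x := lt_of_lt_of_le (lt_min ha hb) hx.1
        exact (Real.rpow_pos_of_pos hx0 _).ne'
    simpa [div_eq_mul_inv] using h1.mul_continuousOn h2
  -- nonnegativity of the integrands
  have hfnn : ∀ x : ℝ, 0 ≤ x → x ≤ 1 → 0 ≤ ω x / x := by
    intro x hx hx1
    rcases eq_or_lt_of_le hx with h | h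
    · simp [← h]
    · exact div_nonneg (hωnn x h hx1) h.le
  have hgnn : ∀ x : ℝ, 0 < x → x ≤ 1 → 0 ≤ ω x / x ^ (1 + θ) := fun x hx hx1 =>
    div_nonneg (hωnn x hx hx1) (Real.rpow_nonneg hx.le _)
  -- key comparison : `r^θ ∫_r^s ω/ρ^{1+θ} ≤ ∫_r^s ω/ρ`
  have key : ∀ r s : ℝ, 0 < r → r ≤ s → s ≤ 1 →
      r ^ θ * ∫ x in r..s, ω x / x ^ (1 + θ) ≤ ∫ x in r..s, ω x / x := by
    intro r s hr hrs hs1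
    rw [← intervalIntegral.integral_const_mul]
    apply intervalIntegral.integral_mono_on hrs
      ((hg_int r s hr (hrs.trans hs1) (hr.trans_le hrs) hs1).const_mul _)
      (hf_int r s hr.le (hrs.trans hs1) (hr.trans_le hrs).le hs1)
    intro x hx
    have hx0 : 0 < x := lt_of_lt_of_le hr hx.1
    have hx1 : x ≤ 1 := hx.2.trans hs1
    have hxne : x ≠ 0 := hx0.ne'
    have hxθ : x ^ θ ≠ 0 := (Real.rpow_pos_of_pos hx0 θ).ne'
    have hsplit : x ^ (1 + θ) = x * x ^ θ := by
      rw [Real.rpow_add hx0, Real.rpow_one]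
    have heq : r ^ θ * (ω x / x ^ (1 + θ)) = r ^ θ / x ^ θ * (ω x / x) := by
      rw [hsplit]
      rw [div_mul_div_comm, mul_div_assoc', mul_comm x (x ^ θ)]
    rw [heq]
    have h1 : r ^ θ / x ^ θ ≤ 1 :=
      div_le_one_of_le₀ (Real.rpow_le_rpow hr.le hx.1 hθ.le) (Real.rpow_nonneg hx0.le _)
    exact mul_le_of_le_one_left (hfnn x hx0.le hx1) h1
  -- rescaling identity for the integrand
  have hcomp_rw : ∀ x : ℝ, ω (x / η ^ 2) / (x / η ^ 2) = η ^ 2 * (ω (x / η ^ 2) / x) := by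
    intro x
    rw [div_div_eq_mul_div]; ring
  -- integrability of the rescaled integrand
  have hcomp_int : ∀ r s : ℝ, 0 < r → r ≤ s → s ≤ η ^ 2 →
      IntervalIntegrable (fun x : ℝ => ω (x / η ^ 2) / x) volume r s := by
    intro r s hr hrs hs
    have hρr : (0:ℝ) ≤ r / η ^ 2 := div_nonneg hr.le hη2.le
    have hρr1 : r / η ^ 2 ≤ 1 := by rw [div_le_one hη2]; exact hrs.trans hs
    have hρs : (0:ℝ) ≤ s / η ^ 2 := div_nonneg (hr.trans_le hrs).le hη2.le
    have hρs1 : s / η ^ 2 ≤ 1 := by rw [div_le_one hη2]; exact hs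
    have h0 := (hf_int (r / η ^ 2) (s / η ^ 2) hρr hρr1 hρs hρs1).comp_mul_right (c := (η ^ 2)⁻¹)
    have her : r / η ^ 2 / (η ^ 2)⁻¹ = r := by field_simp
    have hes : s / η ^ 2 / (η ^ 2)⁻¹ = s := by field_simp
    rw [her, hes] at h0
    have h1 := h0.const_mul (η ^ 2)⁻¹
    have heq : (fun x : ℝ => ω (x / η ^ 2) / x)
        = fun x : ℝ => (η ^ 2)⁻¹ * (ω (x * (η ^ 2)⁻¹) / (x * (η ^ 2)⁻¹)) := by
      funext x
      simp only [← div_eq_mul_inv]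
      rw [hcomp_rw x, ← mul_assoc, inv_mul_cancel₀ hη2.ne', one_mul]
    rw [heq]
    exact h1
  -- substitution inequality : `∫_r^s ω/ρ ≤ ∫_{r/η²}^{s/η²} ω/ρ`
  have hsubst : ∀ r s : ℝ, 0 < r → r ≤ s → s ≤ η ^ 2 →
      (∫ x in r..s, ω x / x) ≤ ∫ ρ in (r / η ^ 2)..(s / η ^ 2), ω ρ / ρ := by
    intro r s hr hrs hs
    have h1 : (∫ ρ in (r / η ^ 2)..(s / η ^ 2), ω ρ / ρ) = ∫ x in r..s, ω (x / η ^ 2) / x := by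
      have h := intervalIntegral.integral_comp_div (a := r) (b := s) (c := η ^ 2)
        (fun ρ => ω ρ / ρ) hη2.ne'
      simp only [hcomp_rw] at h
      rw [intervalIntegral.integral_const_mul, smul_eq_mul] at h
      exact (mul_left_cancel₀ hη2.ne' h).symm
    rw [h1]
    apply intervalIntegral.integral_mono_on hrs
      (hf_int r s hr.le (hrs.trans (hs.trans hη21.le)) (hr.trans_le hrs).le (hs.trans hη21.le))
      (hcomp_int r s hr hrs hs)
    intro x hx
    have hx0 : 0 < x := lt_of_lt_of_le hr hx.1
    have hxs : x ≤ η ^ 2 := hx.2.trans hs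
    have hxle : x ≤ x / η ^ 2 := by
      rw [le_div_iff₀ hη2]; nlinarith
    have hω' : ω x ≤ ω (x / η ^ 2) :=
      hωmono x (x / η ^ 2) hx0 hxle (by rw [div_le_one hη2]; exact hxs)
    exact (div_le_div_iff_of_pos_right hx0).mpr hω'
  -- monotonicity
  have hmain : MonotoneOn
      (fun r : ℝ => r ^ θ + (∫ ρ in (0 : ℝ)..(r / η ^ 2), ω ρ / ρ)
        + r ^ θ * ∫ ρ in r..(1 : ℝ), ω ρ / ρ ^ (1 + θ))
      (Set.Ioo 0 (η ^ 2)) := by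
    intro r hr s hs hrs
    obtain ⟨hr0, hrη⟩ := hr
    obtain ⟨hs0, hsη⟩ := hs
    have hs1 : s ≤ 1 := hsη.le.trans hη21.le
    have hr1 : r ≤ 1 := hrs.trans hs1
    have hrη2 : r / η ^ 2 ≤ 1 := by rw [div_le_one hη2]; exact hrη.le
    have hsη2 : s / η ^ 2 ≤ 1 := by rw [div_le_one hη2]; exact hsη.le
    dsimp only
    have hBsplit : (∫ ρ in r..(1:ℝ), ω ρ / ρ ^ (1 + θ))
        = (∫ ρ in r..s, ω ρ / ρ ^ (1 + θ)) + ∫ ρ in s..(1:ℝ), ω ρ / ρ ^ (1 + θ) :=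
      (intervalIntegral.integral_add_adjacent_intervals
        (hg_int r s hr0 hr1 hs0 hs1) (hg_int s 1 hs0 hs1 one_pos le_rfl)).symm
    have hAsplit : (∫ ρ in (0:ℝ)..(s / η ^ 2), ω ρ / ρ)
        = (∫ ρ in (0:ℝ)..(r / η ^ 2), ω ρ / ρ) + ∫ ρ in (r / η ^ 2)..(s / η ^ 2), ω ρ / ρ :=
      (intervalIntegral.integral_add_adjacent_intervals
        (hf_int 0 (r / η ^ 2) le_rfl zero_le_one (div_nonneg hr0.le hη2.le) hrη2)
        (hf_int (r / η ^ 2) (s / η ^ 2) (div_nonneg hr0.le hη2.le) hrη2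
          (div_nonneg hs0.le hη2.le) hsη2)).symm
    have h4 : r ^ θ * ∫ ρ in r..s, ω ρ / ρ ^ (1 + θ) ≤ ∫ ρ in (r / η ^ 2)..(s / η ^ 2), ω ρ / ρ :=
      (key r s hr0 hrs hs1).trans (hsubst r s hr0 hrs hsη.le)
    have hB1 : 0 ≤ ∫ ρ in s..(1:ℝ), ω ρ / ρ ^ (1 + θ) :=
      intervalIntegral.integral_nonneg hs1 fun x hx => hgnn x (lt_of_lt_of_le hs0 hx.1) hx.2
    have hpow : r ^ θ ≤ s ^ θ := Real.rpow_le_rpow hr0.le hrs hθ.le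
    have h5 : r ^ θ * (∫ ρ in s..(1:ℝ), ω ρ / ρ ^ (1 + θ))
        ≤ s ^ θ * ∫ ρ in s..(1:ℝ), ω ρ / ρ ^ (1 + θ) :=
      mul_le_mul_of_nonneg_right hpow hB1
    rw [hBsplit, hAsplit, mul_add]
    linarith
  -- the primitive of `ω ρ / ρ` tends to `0` at `0⁺`
  have hIccInt : IntegrableOn (fun ρ : ℝ => ω ρ / ρ) (Set.Icc 0 1) := by
    rw [integrableOn_Icc_iff_integrableOn_Ioc]; exact hωdini
  have hFcont : ContinuousOn (fun x : ℝ => ∫ t in (0:ℝ)..x, ω t / t) (Set.Icc 0 1) := by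
    have h := intervalIntegral.continuousOn_primitive_interval (a := (0:ℝ)) (b := 1)
      (μ := volume) (f := fun ρ : ℝ => ω ρ / ρ) (by rwa [Set.uIcc_of_le zero_le_one])
    rwa [Set.uIcc_of_le zero_le_one] at h
  have hF0 : Tendsto (fun x : ℝ => ∫ t in (0:ℝ)..x, ω t / t)
      (nhdsWithin 0 (Set.Ioi 0)) (nhds 0) := by
    have h := hFcont 0 ⟨le_rfl, zero_le_one⟩
    have h' : Tendsto (fun x : ℝ => ∫ t in (0:ℝ)..x, ω t / t)
        (nhdsWithin 0 (Set.Icc 0 1)) (nhds 0) := by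
      simpa [intervalIntegral.integral_same] using h.tendsto
    have h'' := h'.mono_left (nhdsWithin_mono 0 Set.Ioo_subset_Icc_self)
    rwa [nhdsWithin_Ioo_eq_nhdsGT zero_lt_one] at h''
  -- the three limits
  have t1 : Tendsto (fun r : ℝ => r ^ θ) (nhdsWithin 0 (Set.Ioi 0)) (nhds 0) := by
    have h := (Real.continuousAt_rpow_const 0 θ (Or.inr hθ.le)).tendsto
    rw [Real.zero_rpow hθ.ne'] at h
    exact h.mono_left nhdsWithin_le_nhds
  have hd : Tendsto (fun r : ℝ => r / η ^ 2) (nhdsWithin 0 (Set.Ioi 0))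
      (nhdsWithin 0 (Set.Ioi 0)) := by
    apply tendsto_nhdsWithin_of_tendsto_nhds_of_eventually_within
    · have h := (tendsto_id (x := nhds (0:ℝ))).div_const (η ^ 2)
      rw [zero_div] at h
      exact h.mono_left nhdsWithin_le_nhds
    · filter_upwards [self_mem_nhdsWithin] with x hx
      exact div_pos hx hη2
  have t2 : Tendsto (fun r : ℝ => ∫ ρ in (0:ℝ)..(r / η ^ 2), ω ρ / ρ)
      (nhdsWithin 0 (Set.Ioi 0)) (nhds 0) := hF0.comp hd
  have t3 : Tendsto (fun r : ℝ => r ^ θ * ∫ ρ in r..(1:ℝ), ω ρ / ρ ^ (1 + θ))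
      (nhdsWithin 0 (Set.Ioi 0)) (nhds 0) := by
    rw [Metric.tendsto_nhdsWithin_nhds]
    intro ε hε
    have hε2 : (0:ℝ) < ε / 2 := by positivity
    obtain ⟨δ, hδF, hδmem⟩ := ((hF0.eventually
        (eventually_of_mem (Iio_mem_nhds hε2) fun y (hy : y < ε / 2) => hy)).and
      (eventually_of_mem (Ioo_mem_nhdsGT zero_lt_one) fun x hx => hx)).exists
    obtain ⟨hδ0, hδ1⟩ := hδmem
    set K := ∫ ρ in δ..(1:ℝ), ω ρ / ρ ^ (1 + θ) with hKdef
    have hK0 : 0 ≤ K :=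
      intervalIntegral.integral_nonneg hδ1.le fun x hx =>
        hgnn x (lt_of_lt_of_le hδ0 hx.1) hx.2
    have hK1 : (0:ℝ) < K + 1 := by linarith
    refine ⟨min δ ((ε / (2 * (K + 1))) ^ θ⁻¹), by positivity, ?_⟩
    intro x hx hdist
    have hx0 : 0 < x := hx
    rw [Real.dist_eq, sub_zero, abs_of_pos hx0] at hdist
    have hxδ : x < δ := lt_of_lt_of_le hdist (min_le_left _ _)
    have hx1 : x ≤ 1 := hxδ.le.trans hδ1.le
    have hxpow : x ^ θ < ε / (2 * (K + 1)) := by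
      have h1 : x ^ θ < ((ε / (2 * (K + 1))) ^ θ⁻¹) ^ θ :=
        Real.rpow_lt_rpow hx0.le (lt_of_lt_of_le hdist (min_le_right _ _)) hθ
      rwa [Real.rpow_inv_rpow (by positivity) hθ.ne'] at h1
    have hsplit : (∫ ρ in x..(1:ℝ), ω ρ / ρ ^ (1 + θ))
        = (∫ ρ in x..δ, ω ρ / ρ ^ (1 + θ)) + K :=
      (intervalIntegral.integral_add_adjacent_intervals
        (hg_int x δ hx0 hx1 hδ0 hδ1.le) (hg_int δ 1 hδ0 hδ1.le one_pos le_rfl)).symm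
    have h1 : x ^ θ * (∫ ρ in x..δ, ω ρ / ρ ^ (1 + θ)) ≤ ∫ ρ in x..δ, ω ρ / ρ :=
      key x δ hx0 hxδ.le hδ1.le
    have hFsplit : (∫ t in (0:ℝ)..δ, ω t / t)
        = (∫ t in (0:ℝ)..x, ω t / t) + ∫ t in x..δ, ω t / t :=
      (intervalIntegral.integral_add_adjacent_intervals
        (hf_int 0 x le_rfl zero_le_one hx0.le hx1)
        (hf_int x δ hx0.le hx1 hδ0.le hδ1.le)).symm
    have hFx : 0 ≤ ∫ t in (0:ℝ)..x, ω t / t :=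
      intervalIntegral.integral_nonneg hx0.le fun u hu => hfnn u hu.1 (hu.2.trans hx1)
    have h2 : (∫ ρ in x..δ, ω ρ / ρ) < ε / 2 := by
      linarith [hδF, hFsplit, hFx]
    have h3 : x ^ θ * K ≤ x ^ θ * (K + 1) := by
      nlinarith [Real.rpow_nonneg hx0.le θ]
    have h4 : x ^ θ * (K + 1) < ε / 2 := by
      have h := mul_lt_mul_of_pos_right hxpow hK1
      calc x ^ θ * (K + 1) < ε / (2 * (K + 1)) * (K + 1) := h
        _ = ε / 2 := by field_simp
    have hterm0 : 0 ≤ x ^ θ * ∫ ρ in x..(1:ℝ), ω ρ / ρ ^ (1 + θ) :=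
      mul_nonneg (Real.rpow_nonneg hx0.le _)
        (intervalIntegral.integral_nonneg hx1 fun u hu =>
          hgnn u (lt_of_lt_of_le hx0 hu.1) hu.2)
    rw [Real.dist_eq, sub_zero, abs_of_nonneg hterm0]
    calc x ^ θ * ∫ ρ in x..(1:ℝ), ω ρ / ρ ^ (1 + θ)
        = x ^ θ * (∫ ρ in x..δ, ω ρ / ρ ^ (1 + θ)) + x ^ θ * K := by rw [hsplit, mul_add]
      _ ≤ (∫ ρ in x..δ, ω ρ / ρ) + x ^ θ * (K + 1) := by linarith
      _ < ε / 2 + ε / 2 := by linarith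
      _ = ε := by ring
  refine ⟨hmain, ?_⟩
  simpa using (t1.add t2).add t3
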